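/- On the duplex permutation network 𝒢_P on N ≥ 7 agents with all agents using Protocol AND and seed set S₀ = {j}, for all indices with 3 ≤ i ≤ N−3 and j ∈ {2, …, i−2} ∪ {i+2, …, N−2}, the probability that agent i is active at steady state of the multiplex LTM is ℙ_LTM(i) = (1/4)^{|i−j|}; moreover, this coincides with the corresponding steady-state activation probability of agent i on the duplex repeated path network 𝒢_R with all agents using Protocol AND and the same seed. -/
import Mathlib


open MeasureTheory

inductive Protocol
  | OR
  | AND
deriving DecidableEq

noncomputable def ltmStep {n m : ℕ} (w : Fin m → Fin n → Fin n → ℝ)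
    (u : Fin n → Protocol) (μ : Fin n → Fin m → ℝ)
    (A : Finset (Fin n)) : Finset (Fin n) :=
  A ∪ Finset.univ.filter fun i =>
    (u i = Protocol.OR ∧ ∃ k, μ i k < ∑ j ∈ A, w k i j) ∨
    (u i = Protocol.AND ∧ ∀ k, μ i k < ∑ j ∈ A, w k i j)

noncomputable def ltmSS {n m : ℕ} (w : Fin m → Fin n → Fin n → ℝ)
    (u : Fin n → Protocol) (S₀ : Finset (Fin n))
    (μ : Fin n → Fin m → ℝ) : Finset (Fin n) :=
  (ltmStep w u μ)^[n] S₀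

noncomputable def thMeasure (n m : ℕ) : Measure (Fin n → Fin m → ℝ) :=
  Measure.pi fun _ => Measure.pi fun _ => volume.restrict (Set.Icc (0:ℝ) 1)

noncomputable def pLTM {n m : ℕ} (w : Fin m → Fin n → Fin n → ℝ)
    (u : Fin n → Protocol) (S₀ : Finset (Fin n)) (i : Fin n) : ℝ :=
  (thMeasure n m {μ | i ∈ ltmSS w u S₀ μ}).toReal

def lemStep {n m : ℕ} (S₀ : Finset (Fin n)) (u : Fin n → Protocol)
    (σ : Fin n → Fin m → Fin n) (A : Finset (Fin n)) : Finset (Fin n) :=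
  S₀ ∪ A ∪ Finset.univ.filter fun i =>
    (u i = Protocol.OR ∧ ∃ k, σ i k ∈ A) ∨
    (u i = Protocol.AND ∧ ∀ k, σ i k ∈ A)

def UReachable {n m : ℕ} (S₀ : Finset (Fin n)) (u : Fin n → Protocol)
    (σ : Fin n → Fin m → Fin n) (i : Fin n) : Prop :=
  i ∈ (lemStep S₀ u σ)^[n] S₀

instance {n m : ℕ} (S₀ : Finset (Fin n)) (u : Fin n → Protocol)
    (σ : Fin n → Fin m → Fin n) (i : Fin n) : Decidable (UReachable S₀ u σ i) := by
  unfold UReachable; infer_instance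

noncomputable def rProb {n m : ℕ} (w : Fin m → Fin n → Fin n → ℝ)
    (S₀ : Finset (Fin n)) (u : Fin n → Protocol) (i : Fin n) : ℝ :=
  ∑ σ : Fin n → Fin m → Fin n,
    if UReachable S₀ u σ i then ∏ a : Fin n, ∏ k : Fin m, w k a (σ a k) else 0

noncomputable def casCen {n m : ℕ} (w : Fin m → Fin n → Fin n → ℝ)
    (u : Fin n → Protocol) (j : Fin n) : ℝ :=
  ∑ i : Fin n, pLTM w u {j} i

noncomputable def pathW (N : ℕ) (i j : Fin N) : ℝ :=
  if j.val = i.val + 1 ∨ i.val = j.val + 1 then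
    (if i.val = 0 ∨ i.val = N - 1 then 1 else 1/2)
  else 0

noncomputable def cycleW (N : ℕ) (i j : Fin N) : ℝ :=
  if (i.val + 1) % N = j.val ∨ (j.val + 1) % N = i.val then 1/2 else 0

noncomputable def permW2 (N : ℕ) (i j : Fin N) : ℝ :=
  if ((i.val + 1) % N = j.val ∨ (j.val + 1) % N = i.val) ∧
      ¬((i.val = N - 2 ∧ j.val = N - 1) ∨ (i.val = N - 1 ∧ j.val = N - 2)) then
    (if i.val = N - 2 ∨ i.val = N - 1 then 1 else 1/2)
  else 0


section AuxProofs

open Finset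

lemma ltmStep_self_subset {n m : ℕ} (w : Fin m → Fin n → Fin n → ℝ)
    (u : Fin n → Protocol) (μ : Fin n → Fin m → ℝ) (A : Finset (Fin n)) :
    A ⊆ ltmStep w u μ A := Finset.subset_union_left

lemma pathW_nonneg (N : ℕ) (a b : Fin N) : 0 ≤ pathW N a b := by
  unfold pathW; split_ifs <;> norm_num

lemma permW2_nonneg (N : ℕ) (a b : Fin N) : 0 ≤ permW2 N a b := by
  unfold permW2; split_ifs <;> norm_num

lemma pathW_interior (N : ℕ) (hN : 7 ≤ N) (a b : Fin N)
    (h1 : 1 ≤ a.val) (h2 : a.val ≤ N - 3) :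
    pathW N a b = if b.val = a.val + 1 ∨ a.val = b.val + 1 then 1/2 else 0 := by
  unfold pathW
  by_cases hadj : b.val = a.val + 1 ∨ a.val = b.val + 1
  · rw [if_pos hadj, if_pos hadj, if_neg (by omega)]
  · rw [if_neg hadj, if_neg hadj]

lemma permW2_interior (N : ℕ) (hN : 7 ≤ N) (a b : Fin N)
    (h1 : 1 ≤ a.val) (h2 : a.val ≤ N - 3) :
    permW2 N a b = if b.val = a.val + 1 ∨ a.val = b.val + 1 then 1/2 else 0 := by
  have hbN : b.val < N := b.isLt
  have haN : a.val < N := a.isLt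
  have hmod1 : (a.val + 1) % N = a.val + 1 := Nat.mod_eq_of_lt (by omega)
  unfold permW2
  by_cases hadj : b.val = a.val + 1 ∨ a.val = b.val + 1
  · have hcond : ((a.val + 1) % N = b.val ∨ (b.val + 1) % N = a.val) ∧
        ¬((a.val = N - 2 ∧ b.val = N - 1) ∨ (a.val = N - 1 ∧ b.val = N - 2)) := by
      constructor
      · rcases hadj with h | h
        · left; omega
        · right; rw [Nat.mod_eq_of_lt (by omega)]; omega
      · rintro (⟨h, -⟩ | ⟨h, -⟩) <;> omega
    rw [if_pos hcond, if_pos hadj, if_neg (by omega)]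
  · rw [if_neg hadj]
    apply if_neg
    rintro ⟨hc | hc, -⟩
    · exact hadj (Or.inl (by omega))
    · by_cases hb1 : b.val + 1 < N
      · rw [Nat.mod_eq_of_lt hb1] at hc; exact hadj (Or.inr hc.symm)
      · have hbe : b.val + 1 = N := by omega
        rw [hbe, Nat.mod_self] at hc; omega

lemma pathW_block (N : ℕ) (b c : Fin N) (h : pathW N b c ≠ 0) :
    c.val = b.val + 1 ∨ b.val = c.val + 1 := by
  by_contra hc
  exact h (by unfold pathW; rw [if_neg hc])

/-! ### Dynamics: the case `j < i` -/

lemma forward_lt {N : ℕ} (hN : 7 ≤ N) (i j : Fin N)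
    (hj1 : 1 ≤ j.val) (hij : j.val < i.val) (hi2 : i.val ≤ N - 4)
    (w : Fin 2 → Fin N → Fin N → ℝ)
    (hnn : ∀ k a b, 0 ≤ w k a b)
    (hpath : ∀ (k : Fin 2) (a b : Fin N), 1 ≤ a.val → a.val ≤ N - 3 →
      w k a b = if b.val = a.val + 1 ∨ a.val = b.val + 1 then 1/2 else 0)
    (μ : Fin N → Fin 2 → ℝ)
    (hC : ∀ a : Fin N, j.val < a.val → a.val ≤ i.val → ∀ k, μ a k < 1/2) :
    ∀ (t : ℕ) (a : Fin N), j.val ≤ a.val → a.val ≤ i.val → a.val ≤ j.val + t →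
      a ∈ (ltmStep w (fun _ => Protocol.AND) μ)^[t] ({j} : Finset (Fin N)) := by
  intro t
  induction t with
  | zero =>
      intro a h1 h2 h3
      have : a = j := Fin.ext (by omega)
      simp [this]
  | succ t ih =>
      intro a h1 h2 h3
      rw [Function.iterate_succ_apply']
      by_cases hc : a.val ≤ j.val + t
      · exact ltmStep_self_subset _ _ _ _ (ih a h1 h2 hc)
      · have ha : a.val = j.val + t + 1 := by omega
        have hp0 : a.val - 1 < N := by omega
        set p : Fin N := ⟨a.val - 1, hp0⟩ with hpdef
        have hpv : p.val = a.val - 1 := rfl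
        have hpmem : p ∈ (ltmStep w (fun _ => Protocol.AND) μ)^[t] ({j} : Finset (Fin N)) :=
          ih p (by omega) (by omega) (by omega)
        apply Finset.mem_union_right
        rw [Finset.mem_filter]
        refine ⟨Finset.mem_univ _, Or.inr ⟨rfl, fun k => ?_⟩⟩
        have hμ : μ a k < 1/2 := hC a (by omega) h2 k
        have hw : w k a p = 1/2 := by
          rw [hpath k a p (by omega) (by omega)]
          rw [if_pos (Or.inr (by omega))]
        have hsum := Finset.single_le_sum (f := fun b => w k a b)
          (fun b _ => hnn k a b) hpmem
        calc μ a k < 1/2 := hμ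
          _ = w k a p := hw.symm
          _ ≤ _ := hsum

lemma block_lt {N : ℕ} (hN : 7 ≤ N) (i j : Fin N)
    (hj1 : 1 ≤ j.val)
    (w : Fin 2 → Fin N → Fin N → ℝ)
    (hpath : ∀ (k : Fin 2) (a b : Fin N), 1 ≤ a.val → a.val ≤ N - 3 →
      w k a b = if b.val = a.val + 1 ∨ a.val = b.val + 1 then 1/2 else 0)
    (hblock : ∀ b c : Fin N, w 0 b c ≠ 0 → c.val = b.val + 1 ∨ b.val = c.val + 1)
    (μ : Fin N → Fin 2 → ℝ) (hμ0 : ∀ a k, 0 ≤ μ a k)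
    (a : Fin N) (ha1 : j.val < a.val) (ha2 : a.val ≤ N - 3) (k₀ : Fin 2)
    (hk : 1/2 ≤ μ a k₀) :
    ∀ (t : ℕ) (b : Fin N),
      b ∈ (ltmStep w (fun _ => Protocol.AND) μ)^[t] ({j} : Finset (Fin N)) →
      b.val < a.val := by
  intro t
  induction t with
  | zero =>
      intro b hb
      have : b = j := by simpa using hb
      subst this; omega
  | succ t ih =>
      intro b hb
      rw [Function.iterate_succ_apply'] at hb
      rcases Finset.mem_union.mp hb with hb | hb
      · exact ih b hb
      · rw [Finset.mem_filter] at hb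
        rcases hb.2 with ⟨hOR, -⟩ | ⟨-, hAND⟩
        · exact Protocol.noConfusion hOR
        · by_contra hge
          push_neg at hge
          rcases eq_or_lt_of_le hge with heq | hlt
          · -- b = a
            have hba : b = a := Fin.ext heq.symm
            subst hba
            have hb1 : 1 ≤ b.val := by omega
            set S := (ltmStep w (fun _ => Protocol.AND) μ)^[t] ({j} : Finset (Fin N)) with hS
            have hp0 : b.val - 1 < N := by omega
            have hsum : ∑ c ∈ S, w k₀ b c ≤ 1/2 := by
              have hstep : ∑ c ∈ S, w k₀ b c ≤
                  ∑ c ∈ S, (if c = (⟨b.val - 1, hp0⟩ : Fin N) then (1/2 : ℝ) else 0) := by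
                apply Finset.sum_le_sum
                intro c hc
                have hcv : c.val < b.val := by have := ih c hc; omega
                by_cases hcp : c = (⟨b.val - 1, hp0⟩ : Fin N)
                · rw [if_pos hcp, hcp, hpath k₀ b _ hb1 (by omega)]
                  rw [if_pos (Or.inr (by simp; omega))]
                · rw [if_neg hcp, hpath k₀ b c hb1 (by omega)]
                  rw [if_neg]
                  rintro (h | h)
                  · omega
                  · exact hcp (Fin.ext (by simp; omega))
              refine hstep.trans ?_
              rw [Finset.sum_ite_eq' S (⟨b.val - 1, hp0⟩ : Fin N) (fun _ => (1/2 : ℝ))]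
              split <;> norm_num
            exact absurd (hAND k₀) (not_lt.mpr (le_trans hsum hk))
          · -- a < b
            have h0 := hAND 0
            have hsum : ∑ c ∈ (ltmStep w (fun _ => Protocol.AND) μ)^[t]
                ({j} : Finset (Fin N)), w 0 b c = 0 := by
              apply Finset.sum_eq_zero
              intro c hc
              by_contra hne
              have hcv := ih c hc
              rcases hblock b c hne with h | h <;> omega
            rw [hsum] at h0
            exact absurd h0 (not_lt.mpr (hμ0 b 0))

/-! ### Dynamics: the case `i < j` -/

lemma forward_gt {N : ℕ} (hN : 7 ≤ N) (i j : Fin N)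
    (hi1 : 2 ≤ i.val) (hij : i.val < j.val) (hj2 : j.val ≤ N - 3)
    (w : Fin 2 → Fin N → Fin N → ℝ)
    (hnn : ∀ k a b, 0 ≤ w k a b)
    (hpath : ∀ (k : Fin 2) (a b : Fin N), 1 ≤ a.val → a.val ≤ N - 3 →
      w k a b = if b.val = a.val + 1 ∨ a.val = b.val + 1 then 1/2 else 0)
    (μ : Fin N → Fin 2 → ℝ)
    (hC : ∀ a : Fin N, i.val ≤ a.val → a.val < j.val → ∀ k, μ a k < 1/2) :
    ∀ (t : ℕ) (a : Fin N), i.val ≤ a.val → a.val ≤ j.val → j.val ≤ a.val + t →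
      a ∈ (ltmStep w (fun _ => Protocol.AND) μ)^[t] ({j} : Finset (Fin N)) := by
  intro t
  induction t with
  | zero =>
      intro a h1 h2 h3
      have : a = j := Fin.ext (by omega)
      simp [this]
  | succ t ih =>
      intro a h1 h2 h3
      rw [Function.iterate_succ_apply']
      by_cases hc : j.val ≤ a.val + t
      · exact ltmStep_self_subset _ _ _ _ (ih a h1 h2 hc)
      · have ha : j.val = a.val + t + 1 := by omega
        have hp0 : a.val + 1 < N := by have := j.isLt; omega
        set p : Fin N := ⟨a.val + 1, hp0⟩ with hpdef
        have hpv : p.val = a.val + 1 := rfl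
        have hpmem : p ∈ (ltmStep w (fun _ => Protocol.AND) μ)^[t] ({j} : Finset (Fin N)) :=
          ih p (by omega) (by omega) (by omega)
        apply Finset.mem_union_right
        rw [Finset.mem_filter]
        refine ⟨Finset.mem_univ _, Or.inr ⟨rfl, fun k => ?_⟩⟩
        have hμ : μ a k < 1/2 := hC a h1 (by omega) k
        have hw : w k a p = 1/2 := by
          rw [hpath k a p (by omega) (by omega)]
          rw [if_pos (Or.inl (by omega))]
        have hsum := Finset.single_le_sum (f := fun b => w k a b)
          (fun b _ => hnn k a b) hpmem
        calc μ a k < 1/2 := hμ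
          _ = w k a p := hw.symm
          _ ≤ _ := hsum

lemma block_gt {N : ℕ} (hN : 7 ≤ N) (i j : Fin N)
    (w : Fin 2 → Fin N → Fin N → ℝ)
    (hpath : ∀ (k : Fin 2) (a b : Fin N), 1 ≤ a.val → a.val ≤ N - 3 →
      w k a b = if b.val = a.val + 1 ∨ a.val = b.val + 1 then 1/2 else 0)
    (hblock : ∀ b c : Fin N, w 0 b c ≠ 0 → c.val = b.val + 1 ∨ b.val = c.val + 1)
    (μ : Fin N → Fin 2 → ℝ) (hμ0 : ∀ a k, 0 ≤ μ a k)
    (a : Fin N) (ha0 : 1 ≤ a.val) (ha1 : a.val < j.val) (ha2 : a.val ≤ N - 3) (k₀ : Fin 2)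
    (hk : 1/2 ≤ μ a k₀) :
    ∀ (t : ℕ) (b : Fin N),
      b ∈ (ltmStep w (fun _ => Protocol.AND) μ)^[t] ({j} : Finset (Fin N)) →
      a.val < b.val := by
  intro t
  induction t with
  | zero =>
      intro b hb
      have : b = j := by simpa using hb
      subst this; omega
  | succ t ih =>
      intro b hb
      rw [Function.iterate_succ_apply'] at hb
      rcases Finset.mem_union.mp hb with hb | hb
      · exact ih b hb
      · rw [Finset.mem_filter] at hb
        rcases hb.2 with ⟨hOR, -⟩ | ⟨-, hAND⟩
        · exact Protocol.noConfusion hOR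
        · by_contra hge
          push_neg at hge
          rcases eq_or_lt_of_le hge with heq | hlt
          · -- b = a
            have hba : b = a := Fin.ext heq
            subst hba
            set S := (ltmStep w (fun _ => Protocol.AND) μ)^[t] ({j} : Finset (Fin N)) with hS
            have hp0 : b.val + 1 < N := by have := j.isLt; omega
            have hsum : ∑ c ∈ S, w k₀ b c ≤ 1/2 := by
              have hstep : ∑ c ∈ S, w k₀ b c ≤
                  ∑ c ∈ S, (if c = (⟨b.val + 1, hp0⟩ : Fin N) then (1/2 : ℝ) else 0) := by
                apply Finset.sum_le_sum
                intro c hc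
                have hcv : b.val < c.val := by have := ih c hc; omega
                by_cases hcp : c = (⟨b.val + 1, hp0⟩ : Fin N)
                · rw [if_pos hcp, hcp, hpath k₀ b _ ha0 ha2]
                  rw [if_pos (Or.inl (by simp))]
                · rw [if_neg hcp, hpath k₀ b c ha0 ha2]
                  rw [if_neg]
                  rintro (h | h)
                  · exact hcp (Fin.ext (by simp; omega))
                  · omega
              refine hstep.trans ?_
              rw [Finset.sum_ite_eq' S (⟨b.val + 1, hp0⟩ : Fin N) (fun _ => (1/2 : ℝ))]
              split <;> norm_num
            exact absurd (hAND k₀) (not_lt.mpr (le_trans hsum hk))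
          · -- b < a
            have h0 := hAND 0
            have hsum : ∑ c ∈ (ltmStep w (fun _ => Protocol.AND) μ)^[t]
                ({j} : Finset (Fin N)), w 0 b c = 0 := by
              apply Finset.sum_eq_zero
              intro c hc
              by_contra hne
              have hcv := ih c hc
              rcases hblock b c hne with h | h <;> omega
            rw [hsum] at h0
            exact absurd h0 (not_lt.mpr (hμ0 b 0))

/-! ### Event characterisations -/

lemma event_iff_lt {N : ℕ} (hN : 7 ≤ N) (i j : Fin N)
    (hj1 : 1 ≤ j.val) (hij : j.val < i.val) (hi2 : i.val ≤ N - 4)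
    (w : Fin 2 → Fin N → Fin N → ℝ)
    (hnn : ∀ k a b, 0 ≤ w k a b)
    (hpath : ∀ (k : Fin 2) (a b : Fin N), 1 ≤ a.val → a.val ≤ N - 3 →
      w k a b = if b.val = a.val + 1 ∨ a.val = b.val + 1 then 1/2 else 0)
    (hblock : ∀ b c : Fin N, w 0 b c ≠ 0 → c.val = b.val + 1 ∨ b.val = c.val + 1)
    (μ : Fin N → Fin 2 → ℝ) (hμ0 : ∀ a k, 0 ≤ μ a k) :
    i ∈ ltmSS w (fun _ => Protocol.AND) ({j} : Finset (Fin N)) μ ↔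
      ∀ a : Fin N, j.val < a.val → a.val ≤ i.val → ∀ k, μ a k < 1/2 := by
  constructor
  · intro hmem
    by_contra h
    push_neg at h
    obtain ⟨a, ha1, ha2, k₀, hk⟩ := h
    have := block_lt hN i j hj1 w hpath hblock μ hμ0 a ha1 (by omega) k₀ hk N i hmem
    omega
  · intro hC
    exact forward_lt hN i j hj1 hij hi2 w hnn hpath μ hC N i (le_of_lt hij) le_rfl
      (by have := i.isLt; omega)

lemma event_iff_gt {N : ℕ} (hN : 7 ≤ N) (i j : Fin N)
    (hi1 : 2 ≤ i.val) (hij : i.val < j.val) (hj2 : j.val ≤ N - 3)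
    (w : Fin 2 → Fin N → Fin N → ℝ)
    (hnn : ∀ k a b, 0 ≤ w k a b)
    (hpath : ∀ (k : Fin 2) (a b : Fin N), 1 ≤ a.val → a.val ≤ N - 3 →
      w k a b = if b.val = a.val + 1 ∨ a.val = b.val + 1 then 1/2 else 0)
    (hblock : ∀ b c : Fin N, w 0 b c ≠ 0 → c.val = b.val + 1 ∨ b.val = c.val + 1)
    (μ : Fin N → Fin 2 → ℝ) (hμ0 : ∀ a k, 0 ≤ μ a k) :
    i ∈ ltmSS w (fun _ => Protocol.AND) ({j} : Finset (Fin N)) μ ↔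
      ∀ a : Fin N, i.val ≤ a.val → a.val < j.val → ∀ k, μ a k < 1/2 := by
  constructor
  · intro hmem
    by_contra h
    push_neg at h
    obtain ⟨a, ha1, ha2, k₀, hk⟩ := h
    have := block_gt hN i j w hpath hblock μ hμ0 a (by omega) ha2 (by omega) k₀ hk N i hmem
    omega
  · intro hC
    exact forward_gt hN i j hi1 hij hj2 w hnn hpath μ hC N i le_rfl (le_of_lt hij)
      (by have := j.isLt; omega)

/-! ### Measure computations -/

lemma thMeasure_neg_null (n m : ℕ) (a : Fin n) (k : Fin m) :
    thMeasure n m {μ | μ a k < 0} = 0 := by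
  have hset : {μ : Fin n → Fin m → ℝ | μ a k < 0} =
      Set.pi Set.univ (fun a' => if a' = a then {ν : Fin m → ℝ | ν k < 0} else Set.univ) := by
    ext μ
    simp only [Set.mem_setOf_eq, Set.mem_pi, Set.mem_univ, forall_true_left]
    constructor
    · intro h a'
      split_ifs with h'
      · subst h'; exact h
      · trivial
    · intro h
      have := h a
      simpa using this
  rw [thMeasure, hset, Measure.pi_pi]
  apply Finset.prod_eq_zero (Finset.mem_univ a)
  rw [if_pos rfl]
  have hset2 : {ν : Fin m → ℝ | ν k < 0} =
      Set.pi Set.univ (fun k' => if k' = k then Set.Iio (0 : ℝ) else Set.univ) := by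
    ext ν
    simp only [Set.mem_setOf_eq, Set.mem_pi, Set.mem_univ, forall_true_left]
    constructor
    · intro h k'
      split_ifs with h'
      · subst h'; exact h
      · trivial
    · intro h
      have := h k
      simpa using this
  rw [hset2, Measure.pi_pi]
  apply Finset.prod_eq_zero (Finset.mem_univ k)
  rw [if_pos rfl]
  rw [Measure.restrict_apply measurableSet_Iio]
  have : Set.Iio (0 : ℝ) ∩ Set.Icc 0 1 = ∅ := by
    apply Set.eq_empty_iff_forall_notMem.mpr
    rintro x ⟨hx, hx0, -⟩
    exact absurd hx (not_lt.mpr hx0)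
  rw [this]
  simp

lemma thMeasure_congr {n m : ℕ} (E C : Set (Fin n → Fin m → ℝ))
    (h : ∀ μ : Fin n → Fin m → ℝ, (∀ a k, 0 ≤ μ a k) → (μ ∈ E ↔ μ ∈ C)) :
    thMeasure n m E = thMeasure n m C := by
  set Z : Set (Fin n → Fin m → ℝ) := ⋃ (a : Fin n) (k : Fin m), {μ | μ a k < 0} with hZdef
  have hZ : thMeasure n m Z = 0 := by
    refine measure_iUnion_null fun a => measure_iUnion_null fun k => ?_
    exact thMeasure_neg_null n m a k
  have key : ∀ (A B : Set (Fin n → Fin m → ℝ)),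
      (∀ μ, (∀ a k, 0 ≤ μ a k) → μ ∈ A → μ ∈ B) →
      thMeasure n m A ≤ thMeasure n m B := by
    intro A B hAB
    have hsub : A ⊆ B ∪ Z := by
      intro μ hμ
      by_cases hb : ∀ a k, 0 ≤ μ a k
      · exact Or.inl (hAB μ hb hμ)
      · right
        push_neg at hb
        obtain ⟨a, k, hak⟩ := hb
        exact Set.mem_iUnion.mpr ⟨a, Set.mem_iUnion.mpr ⟨k, hak⟩⟩
    calc thMeasure n m A ≤ thMeasure n m (B ∪ Z) := measure_mono hsub
      _ ≤ thMeasure n m B + thMeasure n m Z := measure_union_le _ _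
      _ = thMeasure n m B := by rw [hZ, add_zero]
  exact le_antisymm (key E C fun μ hb => (h μ hb).mp) (key C E fun μ hb => (h μ hb).mpr)

lemma thMeasure_chain {n : ℕ} (T : Finset (Fin n)) :
    thMeasure n 2 {μ | ∀ a ∈ T, ∀ k, μ a k < 1/2} =
      (ENNReal.ofReal (1/4 : ℝ)) ^ T.card := by
  classical
  have hhalf : (volume.restrict (Set.Icc (0 : ℝ) 1)) (Set.Iio (1/2 : ℝ)) =
      ENNReal.ofReal (1/2 : ℝ) := by
    rw [Measure.restrict_apply measurableSet_Iio]
    have : Set.Iio (1/2 : ℝ) ∩ Set.Icc 0 1 = Set.Ico (0 : ℝ) (1/2) := by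
      ext x
      simp only [Set.mem_inter_iff, Set.mem_Iio, Set.mem_Icc, Set.mem_Ico]
      constructor
      · rintro ⟨h1, h2, h3⟩; exact ⟨h2, h1⟩
      · rintro ⟨h1, h2⟩; exact ⟨h2, h1, by linarith⟩
    rw [this, Real.volume_Ico]
    norm_num
  have huniv : (volume.restrict (Set.Icc (0 : ℝ) 1)) Set.univ = 1 := by
    rw [Measure.restrict_apply MeasurableSet.univ, Set.univ_inter, Real.volume_Icc]
    norm_num
  have hinner_half : (Measure.pi fun _ : Fin 2 => volume.restrict (Set.Icc (0 : ℝ) 1))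
      {ν : Fin 2 → ℝ | ∀ k, ν k < 1/2} = ENNReal.ofReal (1/4 : ℝ) := by
    have hs : {ν : Fin 2 → ℝ | ∀ k, ν k < 1/2} =
        Set.pi Set.univ (fun _ : Fin 2 => Set.Iio (1/2 : ℝ)) := by
      ext ν
      simp [Set.mem_pi]
    rw [hs, Measure.pi_pi]
    simp only [hhalf, Finset.prod_const, Finset.card_univ, Fintype.card_fin]
    rw [← ENNReal.ofReal_pow (by norm_num)]
    norm_num
  have hinner_univ : (Measure.pi fun _ : Fin 2 => volume.restrict (Set.Icc (0 : ℝ) 1))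
      Set.univ = 1 := by
    rw [← Set.pi_univ Set.univ, Measure.pi_pi]
    simp [huniv]
  have hset : {μ : Fin n → Fin 2 → ℝ | ∀ a ∈ T, ∀ k, μ a k < 1/2} =
      Set.pi Set.univ
        (fun a => if a ∈ T then {ν : Fin 2 → ℝ | ∀ k, ν k < 1/2} else Set.univ) := by
    ext μ
    simp only [Set.mem_setOf_eq, Set.mem_pi, Set.mem_univ, forall_true_left]
    constructor
    · intro h a
      split_ifs with h'
      · exact h a h'
      · trivial
    · intro h a ha k
      have := h a
      rw [if_pos ha] at this
      exact this k
  rw [thMeasure, hset, Measure.pi_pi]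
  have : ∀ a : Fin n,
      (Measure.pi fun _ : Fin 2 => volume.restrict (Set.Icc (0 : ℝ) 1))
        (if a ∈ T then {ν : Fin 2 → ℝ | ∀ k, ν k < 1/2} else Set.univ) =
      (if a ∈ T then ENNReal.ofReal (1/4 : ℝ) else 1) := by
    intro a
    split_ifs with h
    · exact hinner_half
    · exact hinner_univ
  rw [Finset.prod_congr rfl fun a _ => this a]
  rw [Finset.prod_ite_mem Finset.univ T fun _ => ENNReal.ofReal (1/4 : ℝ)]
  rw [Finset.univ_inter, Finset.prod_const]

end AuxProofs

/-- on the duplex permutation network on `N ≥ 7` agents with all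
agents using Protocol AND and seed `{j}`, under the same index conditions,
ℙ_LTM(i) = (1/4)^{|i−j|}; moreover this coincides with the steady-state activation
probability on the duplex repeated path network with all agents using AND. -/
theorem permutation_AND_prob (N : ℕ) (hN : 7 ≤ N) (i j : Fin N)
    (hi1 : 2 ≤ i.val) (hi2 : i.val ≤ N - 4)
    (hj1 : 1 ≤ j.val) (hj2 : j.val ≤ N - 3)
    (hd : 2 ≤ Nat.dist i.val j.val) :
    pLTM (fun k : Fin 2 => if k = 0 then pathW N else permW2 N)
        (fun _ => Protocol.AND) {j} i = (1/4 : ℝ) ^ (Nat.dist i.val j.val) ∧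
    pLTM (fun k : Fin 2 => if k = 0 then pathW N else permW2 N)
        (fun _ => Protocol.AND) {j} i =
      pLTM (fun _ : Fin 2 => pathW N) (fun _ => Protocol.AND) {j} i := by
  classical
  have hiN : i.val < N := i.isLt
  have hjN : j.val < N := j.isLt
  -- weights
  set wP : Fin 2 → Fin N → Fin N → ℝ := fun k : Fin 2 => if k = 0 then pathW N else permW2 N
    with hwP
  set wR : Fin 2 → Fin N → Fin N → ℝ := fun _ : Fin 2 => pathW N with hwR
  have hnnP : ∀ k a b, 0 ≤ wP k a b := by
    intro k a b
    rw [hwP]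
    dsimp only
    split_ifs
    · exact pathW_nonneg N a b
    · exact permW2_nonneg N a b
  have hnnR : ∀ k a b, 0 ≤ wR k a b := fun k a b => pathW_nonneg N a b
  have hpathP : ∀ (k : Fin 2) (a b : Fin N), 1 ≤ a.val → a.val ≤ N - 3 →
      wP k a b = if b.val = a.val + 1 ∨ a.val = b.val + 1 then 1/2 else 0 := by
    intro k a b h1 h2
    by_cases hk : k = 0
    · rw [hwP]; dsimp only; rw [if_pos hk]; exact pathW_interior N hN a b h1 h2
    · rw [hwP]; dsimp only; rw [if_neg hk]; exact permW2_interior N hN a b h1 h2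
  have hpathR : ∀ (k : Fin 2) (a b : Fin N), 1 ≤ a.val → a.val ≤ N - 3 →
      wR k a b = if b.val = a.val + 1 ∨ a.val = b.val + 1 then 1/2 else 0 :=
    fun k a b h1 h2 => pathW_interior N hN a b h1 h2
  have hblockP : ∀ b c : Fin N, wP 0 b c ≠ 0 → c.val = b.val + 1 ∨ b.val = c.val + 1 := by
    intro b c h
    apply pathW_block N b c
    simpa [hwP] using h
  have hblockR : ∀ b c : Fin N, wR 0 b c ≠ 0 → c.val = b.val + 1 ∨ b.val = c.val + 1 :=
    fun b c h => pathW_block N b c h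
  have hij : j.val < i.val ∨ i.val < j.val := by
    rcases Nat.lt_trichotomy j.val i.val with h | h | h
    · exact Or.inl h
    · exfalso; rw [Nat.dist] at hd; omega
    · exact Or.inr h
  -- common value
  have hcommon : ∀ w : Fin 2 → Fin N → Fin N → ℝ,
      (∀ k a b, 0 ≤ w k a b) →
      (∀ (k : Fin 2) (a b : Fin N), 1 ≤ a.val → a.val ≤ N - 3 →
        w k a b = if b.val = a.val + 1 ∨ a.val = b.val + 1 then 1/2 else 0) →
      (∀ b c : Fin N, w 0 b c ≠ 0 → c.val = b.val + 1 ∨ b.val = c.val + 1) →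
      pLTM w (fun _ => Protocol.AND) ({j} : Finset (Fin N)) i =
        (1/4 : ℝ) ^ (Nat.dist i.val j.val) := by
    intro w hnn hpath hblock
    rcases hij with hlt | hgt
    · -- j < i
      have hmeq : thMeasure N 2 {μ | i ∈ ltmSS w (fun _ => Protocol.AND) {j} μ} =
          thMeasure N 2 {μ | ∀ a ∈ Finset.Ioc j i, ∀ k, μ a k < 1/2} := by
        apply thMeasure_congr
        intro μ hb
        rw [Set.mem_setOf_eq, Set.mem_setOf_eq,
          event_iff_lt hN i j hj1 hlt hi2 w hnn hpath hblock μ hb]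
        constructor
        · intro h a ha k
          rw [Finset.mem_Ioc] at ha
          exact h a (by exact_mod_cast ha.1) (by exact_mod_cast ha.2) k
        · intro h a h1 h2 k
          exact h a (Finset.mem_Ioc.mpr ⟨by exact_mod_cast h1, by exact_mod_cast h2⟩) k
      have hcard : (Finset.Ioc j i).card = Nat.dist i.val j.val := by
        rw [Fin.card_Ioc, Nat.dist]
        omega
      rw [pLTM, hmeq, thMeasure_chain, hcard, ENNReal.toReal_pow,
        ENNReal.toReal_ofReal (by norm_num : (0:ℝ) ≤ 1/4)]
    · -- i < j
      have hmeq : thMeasure N 2 {μ | i ∈ ltmSS w (fun _ => Protocol.AND) {j} μ} =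
          thMeasure N 2 {μ | ∀ a ∈ Finset.Ico i j, ∀ k, μ a k < 1/2} := by
        apply thMeasure_congr
        intro μ hb
        rw [Set.mem_setOf_eq, Set.mem_setOf_eq,
          event_iff_gt hN i j hi1 hgt hj2 w hnn hpath hblock μ hb]
        constructor
        · intro h a ha k
          rw [Finset.mem_Ico] at ha
          exact h a (by exact_mod_cast ha.1) (by exact_mod_cast ha.2) k
        · intro h a h1 h2 k
          exact h a (Finset.mem_Ico.mpr ⟨by exact_mod_cast h1, by exact_mod_cast h2⟩) k
      have hcard : (Finset.Ico i j).card = Nat.dist i.val j.val := by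
        rw [Fin.card_Ico, Nat.dist]
        omega
      rw [pLTM, hmeq, thMeasure_chain, hcard, ENNReal.toReal_pow,
        ENNReal.toReal_ofReal (by norm_num : (0:ℝ) ≤ 1/4)]
  have hP := hcommon wP hnnP hpathP hblockP
  have hR := hcommon wR hnnR hpathR hblockR
  exact ⟨hP, hP.trans hR.symm⟩
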